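/- For the maximum-weight b-matching mechanisms M_BFS and M_DFS with a fixed agent processing order, the first agent's optimal strategy is to report exactly the edges to its b_1 highest-valued incident tasks: doing so guarantees agent a_1 receives precisely its top b_1 tasks (or all its tasks if it has fewer than b_1), which is the maximum utility a_1 can obtain under any report. -/

import Mathlib

open Classical

/-- An edge of the bipartite graph: a pair (agent, task). -/
abbrev Edge (n m : ℕ) := Fin n × Fin m

variable {n m : ℕ}

/-- Number of tasks assigned to agent `i` in the edge set `μ`. -/
def deg (μ : Finset (Edge n m)) (i : Fin n) : ℕ := (μ.filter (fun e => e.1 = i)).card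

/-- `μ` is a b-matching over the edge set `E'`: it uses only edges of `E'`, each agent `i`
receives at most `b i` tasks, and each task is matched to at most one agent. -/
def IsBMatching (b : Fin n → ℕ) (E' μ : Finset (Edge n m)) : Prop :=
  μ ⊆ E' ∧ (∀ i, deg μ i ≤ b i) ∧ ∀ j : Fin m, (μ.filter (fun e => e.2 = j)).card ≤ 1

/-- Weight of a matching: total value of matched tasks. -/
noncomputable def weight (q : Fin m → ℝ) (μ : Finset (Edge n m)) : ℝ := ∑ e ∈ μ, q e.2

/-- Utility of agent `i`: total value of the tasks matched to `i`. -/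
noncomputable def util (q : Fin m → ℝ) (i : Fin n) (μ : Finset (Edge n m)) : ℝ :=
  ∑ e ∈ μ.filter (fun e => e.1 = i), q e.2

/-- `μ` is a maximum vertex-weighted b-matching over the edge set `E'`. -/
def IsMaxMatching (b : Fin n → ℕ) (q : Fin m → ℝ) (E' μ : Finset (Edge n m)) : Prop :=
  IsBMatching b E' μ ∧ ∀ ν, IsBMatching b E' ν → weight q ν ≤ weight q μ

/-- The edges of `E` incident to agent `i`. -/
def agentEdges (E : Finset (Edge n m)) (i : Fin n) : Finset (Edge n m) :=
  E.filter (fun e => e.1 = i)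

/-- The edge set obtained from `E` when agent `i` reports `S` instead of its true edges. -/
def deviate (E : Finset (Edge n m)) (i : Fin n) (S : Finset (Edge n m)) : Finset (Edge n m) :=
  E.filter (fun e => e.1 ≠ i) ∪ S

/-- A valid report of agent `i`: a nonempty subset of its true incident edges. -/
def ValidReport (E : Finset (Edge n m)) (i : Fin n) (S : Finset (Edge n m)) : Prop :=
  S ⊆ agentEdges E i ∧ S.Nonempty
open Classical in
/-- The tasks sorted in non-increasing order of value (ties broken by index). -/
noncomputable def sortedTasks (m : ℕ) (q : Fin m → ℝ) : List (Fin m) :=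
  List.insertionSort (fun j k => q k ≤ q j) (List.finRange m)

/-- The greedy mechanism `M_AP`: process tasks in non-increasing value order, assigning each
task to the highest-priority unsaturated agent connected to it, if any. -/
noncomputable def MAP (b : Fin n → ℕ) (q : Fin m → ℝ) (E' : Finset (Edge n m)) :
    Finset (Edge n m) :=
  (sortedTasks m q).foldl (fun μ j =>
    match (List.finRange n).find? (fun i => decide ((i, j) ∈ E' ∧ deg μ i < b i)) with
    | some i => insert (i, j) μ
    | none => μ) ∅

/-- `p = [(i₁,j₁),…,(i_L,j_L)]` is an augmenting path from task `j = j₁` with respect to the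
matching `μ` in the graph `E'`: the edges `(i_ℓ, j_ℓ)` are non-matching edges of `E'`, the
edges `(i_ℓ, j_{ℓ+1})` are matching edges, all interior agents are saturated and the final
agent is unsaturated. -/
structure IsAugPathFrom (b : Fin n → ℕ) (E' μ : Finset (Edge n m)) (j : Fin m)
    (p : List (Edge n m)) : Prop where
  ne : p ≠ []
  starts : ∀ e ∈ p.head?, e.2 = j
  mem : ∀ e ∈ p, e ∈ E' ∧ e ∉ μ
  matched : ∀ k, (h : k + 1 < p.length) →
    ((p.get ⟨k, Nat.lt_of_succ_lt h⟩).1, (p.get ⟨k + 1, h⟩).2) ∈ μ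
  satInterior : ∀ k, (h : k + 1 < p.length) →
    b (p.get ⟨k, Nat.lt_of_succ_lt h⟩).1 ≤ deg μ (p.get ⟨k, Nat.lt_of_succ_lt h⟩).1
  unsatLast : ∀ e ∈ p.getLast?, deg μ e.1 < b e.1
  agentsNodup : (p.map Prod.fst).Nodup
  tasksNodup : (p.map Prod.snd).Nodup

/-- The matching edges of an augmenting path. -/
def pathMatched (p : List (Edge n m)) : List (Edge n m) :=
  (p.zip p.tail).map (fun ef => (ef.1.1, ef.2.2))

/-- Flip an augmenting path: remove its matching edges and add its non-matching edges. -/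
def applyPath (μ : Finset (Edge n m)) (p : List (Edge n m)) : Finset (Edge n m) :=
  (μ \ (pathMatched p).toFinset) ∪ p.toFinset

/-- A numeric key realizing the lexicographic order (by vertex indices) on augmenting paths. -/
def pathKey (n m : ℕ) (p : List (Edge n m)) : ℕ :=
  ((p.flatMap fun (e : Edge n m) => [e.1.val + 1, e.2.val + 1]) ++
    List.replicate (2 * n - 2 * p.length) 0).foldl (fun a d => a * (n + m + 2) + d) 0

/-- DFS explores agents in priority order and goes deep first: it returns the lexicographically
least augmenting path. -/
def dfsCost (n m : ℕ) (p : List (Edge n m)) : ℕ := pathKey n m p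

/-- BFS returns a shortest augmenting path, exploring vertices in priority order: it returns
the lexicographically least augmenting path among those of minimum length. -/
def bfsCost (n m : ℕ) (p : List (Edge n m)) : ℕ :=
  p.length * (n + m + 2) ^ (2 * n + 2) + pathKey n m p

/-- Select the cost-minimal augmenting path from task `j`, if an augmenting path exists. -/
noncomputable def selectPath (cost : List (Edge n m) → ℕ) (b : Fin n → ℕ)
    (E' μ : Finset (Edge n m)) (j : Fin m) : Option (List (Edge n m)) :=
  if h : ∃ p, IsAugPathFrom b E' μ j p ∧ ∀ p', IsAugPathFrom b E' μ j p' → cost p ≤ cost p'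
  then some h.choose else none

/-- The augmenting-path algorithm: process tasks in non-increasing value order, at each step
flipping the augmenting path found by the (deterministic) search given by `cost`. -/
noncomputable def runAug (cost : List (Edge n m) → ℕ) (b : Fin n → ℕ) (q : Fin m → ℝ)
    (E' : Finset (Edge n m)) : Finset (Edge n m) :=
  (sortedTasks m q).foldl (fun μ j =>
    match selectPath cost b E' μ j with
    | some p => applyPath μ p
    | none => μ) ∅

/-- The maximum vertex-weighted b-matching mechanism using breadth-first search. -/
noncomputable def MBFS (b : Fin n → ℕ) (q : Fin m → ℝ) (E' : Finset (Edge n m)) :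
    Finset (Edge n m) := runAug (bfsCost n m) b q E'

/-- The maximum vertex-weighted b-matching mechanism using depth-first search. -/
noncomputable def MDFS (b : Fin n → ℕ) (q : Fin m → ℝ) (E' : Finset (Edge n m)) :
    Finset (Edge n m) := runAug (dfsCost n m) b q E'

section AuxProof

private def dval (B : ℕ) (L : List ℕ) : ℕ := L.foldl (fun a d => a * B + d) 0

private lemma foldl_encode (B : ℕ) (L : List ℕ) (a : ℕ) :
    L.foldl (fun a d => a * B + d) a = a * B ^ L.length + dval B L := by
  induction L generalizing a with
  | nil => simp [dval]
  | cons d t ih =>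
    have h1 := ih (a * B + d)
    have h2 := ih d
    simp only [List.foldl_cons, List.length_cons, dval] at *
    rw [h1]
    have : List.foldl (fun a d => a * B + d) (0 * B + d) t
        = d * B ^ t.length + List.foldl (fun a d => a * B + d) 0 t := by
      simpa using h2
    rw [this]
    ring

private lemma dval_cons (B d : ℕ) (t : List ℕ) :
    dval B (d :: t) = d * B ^ t.length + dval B t := by
  have := foldl_encode B t d
  simpa [dval] using this

private lemma dval_lt {B : ℕ} (hB : 0 < B) {L : List ℕ} (h : ∀ d ∈ L, d < B) :
    dval B L < B ^ L.length := by
  induction L with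
  | nil => simp [dval]
  | cons d t ih =>
    rw [dval_cons]
    have h1 : dval B t < B ^ t.length := ih (fun d hd => h d (List.mem_cons_of_mem _ hd))
    have h2 : d + 1 ≤ B := h d List.mem_cons_self
    calc d * B ^ t.length + dval B t < d * B ^ t.length + B ^ t.length := by omega
      _ = (d + 1) * B ^ t.length := by ring
      _ ≤ B * B ^ t.length := Nat.mul_le_mul_right _ h2
      _ = B ^ (d :: t).length := by rw [List.length_cons]; ring

variable {n m : ℕ}

private def pDigits (n m : ℕ) (p : List (Edge n m)) : List ℕ :=
  (p.flatMap fun e => [e.1.val + 1, e.2.val + 1]) ++ List.replicate (2 * n - 2 * p.length) 0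

private lemma pathKey_eq_dval (p : List (Edge n m)) :
    pathKey n m p = dval (n + m + 2) (pDigits n m p) := rfl

private lemma length_flatMap2 (p : List (Edge n m)) :
    (p.flatMap fun e => [e.1.val + 1, e.2.val + 1]).length = 2 * p.length := by
  induction p with
  | nil => simp
  | cons e t ih => simp only [List.flatMap_cons, List.length_append, List.length_cons, ih]
                   simp; omega

private lemma pDigits_singleton (hn : 0 < n) (j : Fin m) :
    pDigits n m [((⟨0, hn⟩ : Fin n), j)]
      = 1 :: ((j.val + 1) :: List.replicate (2 * n - 2) 0) := by
  simp [pDigits]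

private lemma pDigits_cons (i : Fin n) (j : Fin m) (t : List (Edge n m)) :
    pDigits n m ((i, j) :: t)
      = (i.val + 1) :: ((j.val + 1) ::
          ((t.flatMap fun e => [e.1.val + 1, e.2.val + 1])
            ++ List.replicate (2 * n - 2 * (t.length + 1)) 0)) := by
  simp [pDigits]

private lemma pathKey_lt (hn : 0 < n) (j : Fin m) (i : Fin n) (t : List (Edge n m))
    (hlen : t.length + 1 ≤ n) (hi : i.val ≠ 0) :
    pathKey n m [((⟨0, hn⟩ : Fin n), j)] < pathKey n m ((i, j) :: t) := by
  set B := n + m + 2 with hB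
  set T1 : List ℕ := (j.val + 1) :: List.replicate (2 * n - 2) 0 with hT1
  set T2 : List ℕ := (j.val + 1) ::
      ((t.flatMap fun e => [e.1.val + 1, e.2.val + 1])
        ++ List.replicate (2 * n - 2 * (t.length + 1)) 0) with hT2
  have hl1 : T1.length = 2 * n - 1 := by simp [hT1]; omega
  have hl2 : T2.length = 2 * n - 1 := by
    rw [hT2]
    simp only [List.length_cons, List.length_append, List.length_replicate, length_flatMap2]
    omega
  have hTlt : ∀ d ∈ T1, d < B := by
    intro d hd
    simp only [hT1, List.mem_cons, List.mem_replicate] at hd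
    rcases hd with rfl | ⟨_, rfl⟩ <;> [skip; omega]
    have := j.isLt; omega
  have h3 : dval B T1 < B ^ (2 * n - 1) := by
    rw [← hl1]; exact dval_lt (by omega) hTlt
  rw [pathKey_eq_dval, pathKey_eq_dval, pDigits_singleton hn, pDigits_cons,
    ← hT1, ← hT2, dval_cons B 1 T1, dval_cons B (i.val + 1) T2, hl1, hl2]
  have h4 : 2 ≤ i.val + 1 := by omega
  nlinarith [Nat.zero_le (dval B T2), pow_pos (show 0 < B by omega) (2 * n - 1)]

private lemma dfsCost_lt (hn : 0 < n) (j : Fin m) (i : Fin n) (t : List (Edge n m))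
    (hlen : t.length + 1 ≤ n) (hi : i.val ≠ 0) :
    dfsCost n m [((⟨0, hn⟩ : Fin n), j)] < dfsCost n m ((i, j) :: t) :=
  pathKey_lt hn j i t hlen hi

private lemma bfsCost_lt (hn : 0 < n) (j : Fin m) (i : Fin n) (t : List (Edge n m))
    (hlen : t.length + 1 ≤ n) (hi : i.val ≠ 0) :
    bfsCost n m [((⟨0, hn⟩ : Fin n), j)] < bfsCost n m ((i, j) :: t) := by
  have h1 := pathKey_lt hn j i t hlen hi
  unfold bfsCost
  simp only [List.length_cons, List.length_nil]
  have h2 : 0 + 1 ≤ t.length + 1 := by omega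
  exact Nat.add_lt_add_of_le_of_lt (Nat.mul_le_mul_right _ h2) h1

private lemma mem_pathMatched_iff {p : List (Edge n m)} {e : Edge n m} :
    e ∈ pathMatched p ↔ ∃ k, ∃ h : k + 1 < p.length,
      e = ((p[k]'(Nat.lt_of_succ_lt h)).1, (p[k+1]'h).2) := by
  unfold pathMatched
  rw [List.mem_map]
  constructor
  · rintro ⟨ef, hef, rfl⟩
    rw [List.mem_iff_getElem] at hef
    obtain ⟨k, hk, hef⟩ := hef
    have hk' : k + 1 < p.length := by
      simp only [List.length_zip, List.length_tail, lt_min_iff] at hk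
      omega
    refine ⟨k, hk', ?_⟩
    rw [← hef, List.getElem_zip, List.getElem_tail]
  · rintro ⟨k, h, rfl⟩
    refine ⟨(p[k]'(Nat.lt_of_succ_lt h), p[k+1]'h), ?_, rfl⟩
    rw [List.mem_iff_getElem]
    refine ⟨k, ?_, ?_⟩
    · simp only [List.length_zip, List.length_tail, lt_min_iff]; omega
    · rw [List.getElem_zip, List.getElem_tail]

private lemma applyPath_inv {b : Fin n → ℕ} {E' μ : Finset (Edge n m)} {seen : Finset (Fin m)}
    {j : Fin m} {p : List (Edge n m)}
    (hM : IsBMatching b E' μ) (hseen : ∀ e ∈ μ, e.2 ∈ seen) (hj : j ∉ seen)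
    (hp : IsAugPathFrom b E' μ j p) :
    IsBMatching b E' (applyPath μ p) ∧ ∀ e ∈ applyPath μ p, e.2 ∈ insert j seen := by
  classical
  obtain ⟨hsub, hdeg, htask⟩ := hM
  have hlen0 : 0 < p.length := List.length_pos_iff.mpr hp.ne
  have hhead : (p[0]'hlen0).2 = j := by
    apply hp.starts
    rw [List.head?_eq_getElem?, List.getElem?_eq_getElem hlen0]
    rfl
  have hmatched : ∀ k (h : k + 1 < p.length),
      ((p[k]'(Nat.lt_of_succ_lt h)).1, (p[k+1]'h).2) ∈ μ := by
    intro k h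
    have := hp.matched k h
    simpa [List.get_eq_getElem] using this
  have hmem_apply : ∀ e ∈ applyPath μ p,
      (e ∈ μ ∧ e ∉ (pathMatched p).toFinset) ∨ e ∈ p := by
    intro e he
    simp only [applyPath, Finset.mem_union, Finset.mem_sdiff, List.mem_toFinset] at he
    rcases he with h | h
    · exact Or.inl ⟨h.1, fun hx => h.2 (List.mem_toFinset.mp hx)⟩
    · exact Or.inr h
  have htaskmem : ∀ k (h : k < p.length), (p[k]'h).2 ∈ insert j seen := by
    intro k h
    match k with
    | 0 => rw [hhead]; exact Finset.mem_insert_self _ _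
    | (k' + 1) =>
      exact Finset.mem_insert_of_mem
        (hseen ((p[k']'(Nat.lt_of_succ_lt h)).1, (p[k'+1]'h).2) (hmatched k' h))
  have hagent_uniq : ∀ k k' (hk : k < p.length) (hk' : k' < p.length),
      (p[k]'hk).1 = (p[k']'hk').1 → k = k' := by
    intro k k' hk hk' hkk
    have hnd := hp.agentsNodup
    have h1 : (p.map Prod.fst)[k]'(by simpa using hk)
        = (p.map Prod.fst)[k']'(by simpa using hk') := by
      simp only [List.getElem_map]; exact hkk
    exact hnd.getElem_inj_iff.mp h1
  have htask_uniq : ∀ k k' (hk : k < p.length) (hk' : k' < p.length),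
      (p[k]'hk).2 = (p[k']'hk').2 → k = k' := by
    intro k k' hk hk' hkk
    have hnd := hp.tasksNodup
    have h1 : (p.map Prod.snd)[k]'(by simpa using hk)
        = (p.map Prod.snd)[k']'(by simpa using hk') := by
      simp only [List.getElem_map]; exact hkk
    exact hnd.getElem_inj_iff.mp h1
  refine ⟨⟨?_, ?_, ?_⟩, ?_⟩
  · -- subset of E'
    intro e he
    rcases hmem_apply e he with ⟨h1, _⟩ | h1
    · exact hsub h1
    · exact (hp.mem e h1).1
  · -- degree bound
    intro i
    have hsplit : deg (applyPath μ p) i ≤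
        ((μ \ (pathMatched p).toFinset).filter (fun e => e.1 = i)).card
          + (p.toFinset.filter (fun e => e.1 = i)).card := by
      unfold deg
      refine le_trans (Finset.card_le_card ?_) (Finset.card_union_le _ _)
      intro e
      simp only [applyPath, Finset.mem_filter, Finset.mem_union]
      tauto
    by_cases hi : ∃ k, ∃ h : k < p.length, (p[k]'h).1 = i
    · obtain ⟨k, hk, hki⟩ := hi
      have hPf : p.toFinset.filter (fun e => e.1 = i) ⊆ {p[k]'hk} := by
        intro e he
        simp only [Finset.mem_filter, List.mem_toFinset] at he
        obtain ⟨hep, hei⟩ := he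
        obtain ⟨k', hk', rfl⟩ := List.mem_iff_getElem.mp hep
        have := hagent_uniq k' k hk' hk (hei.trans hki.symm)
        subst this
        exact Finset.mem_singleton_self _
      have hPfc : (p.toFinset.filter (fun e => e.1 = i)).card ≤ 1 :=
        le_trans (Finset.card_le_card hPf) (by simp)
      by_cases hlast : k + 1 < p.length
      · set mk : Edge n m := ((p[k]'hk).1, (p[k+1]'hlast).2) with hmk
        have hmkμ : mk ∈ μ := hmatched k hlast
        have hmkM : mk ∈ (pathMatched p).toFinset :=
          List.mem_toFinset.mpr (mem_pathMatched_iff.mpr ⟨k, hlast, rfl⟩)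
        have hmkf : mk ∈ μ.filter (fun e => e.1 = i) := by
          simp only [Finset.mem_filter]
          exact ⟨hmkμ, hki⟩
        have hsub2 : (μ \ (pathMatched p).toFinset).filter (fun e => e.1 = i)
            ⊆ (μ.filter (fun e => e.1 = i)).erase mk := by
          intro e he
          simp only [Finset.mem_filter, Finset.mem_sdiff] at he
          rw [Finset.mem_erase]
          refine ⟨?_, Finset.mem_filter.mpr ⟨he.1.1, he.2⟩⟩
          rintro rfl
          exact he.1.2 hmkM
        have h1 : ((μ \ (pathMatched p).toFinset).filter (fun e => e.1 = i)).card
            ≤ deg μ i - 1 := by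
          refine le_trans (Finset.card_le_card hsub2) ?_
          rw [Finset.card_erase_of_mem hmkf]
          unfold deg
          exact le_rfl
        have h2 : 1 ≤ deg μ i := by
          unfold deg
          exact Finset.card_pos.mpr ⟨mk, hmkf⟩
        have := hdeg i
        omega
      · -- k is the last index
        have hkl : p.length - 1 = k := by omega
        have hgl : p.getLast? = some (p[k]'hk) := by
          rw [List.getLast?_eq_getElem?]
          rw [show p.length - 1 = k from hkl]
          exact List.getElem?_eq_getElem hk
        have hunsat := hp.unsatLast _ hgl
        rw [hki] at hunsat
        have h1 : ((μ \ (pathMatched p).toFinset).filter (fun e => e.1 = i)).card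
            ≤ deg μ i := by
          unfold deg
          refine Finset.card_le_card ?_
          intro e he
          simp only [Finset.mem_filter, Finset.mem_sdiff] at he ⊢
          exact ⟨he.1.1, he.2⟩
        omega
    · push_neg at hi
      have hPf : p.toFinset.filter (fun e => e.1 = i) = ∅ := by
        rw [Finset.filter_eq_empty_iff]
        intro e he
        rw [List.mem_toFinset] at he
        obtain ⟨k', hk', rfl⟩ := List.mem_iff_getElem.mp he
        exact hi k' hk'
      rw [hPf] at hsplit
      simp only [Finset.card_empty, add_zero] at hsplit
      have h1 : ((μ \ (pathMatched p).toFinset).filter (fun e => e.1 = i)).card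
          ≤ deg μ i := by
        unfold deg
        refine Finset.card_le_card ?_
        intro e he
        simp only [Finset.mem_filter, Finset.mem_sdiff] at he ⊢
        exact ⟨he.1.1, he.2⟩
      exact le_trans hsplit (le_trans h1 (hdeg i))
  · -- task constraint
    intro t
    have hsplit : ((applyPath μ p).filter (fun e => e.2 = t)).card ≤
        ((μ \ (pathMatched p).toFinset).filter (fun e => e.2 = t)).card
          + (p.toFinset.filter (fun e => e.2 = t)).card := by
      refine le_trans (Finset.card_le_card ?_) (Finset.card_union_le _ _)
      intro e
      simp only [applyPath, Finset.mem_filter, Finset.mem_union]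
      tauto
    by_cases ht : ∃ k, ∃ h : k < p.length, (p[k]'h).2 = t
    · obtain ⟨k, hk, hkt⟩ := ht
      have hPf : p.toFinset.filter (fun e => e.2 = t) ⊆ {p[k]'hk} := by
        intro e he
        simp only [Finset.mem_filter, List.mem_toFinset] at he
        obtain ⟨hep, hei⟩ := he
        obtain ⟨k', hk', rfl⟩ := List.mem_iff_getElem.mp hep
        have := htask_uniq k' k hk' hk (hei.trans hkt.symm)
        subst this
        exact Finset.mem_singleton_self _
      have hPfc : (p.toFinset.filter (fun e => e.2 = t)).card ≤ 1 :=
        le_trans (Finset.card_le_card hPf) (by simp)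
      have hMf : (μ \ (pathMatched p).toFinset).filter (fun e => e.2 = t) = ∅ := by
        rw [Finset.filter_eq_empty_iff]
        intro e he het
        rw [Finset.mem_sdiff] at he
        match k, hk, hkt with
        | 0, hk, hkt =>
          have htj : t = j := by rw [← hkt]; exact hhead
          subst htj
          exact hj (het ▸ hseen e he.1)
        | (k' + 1), hk, hkt =>
          set me : Edge n m := ((p[k']'(Nat.lt_of_succ_lt hk)).1, t) with hme
          have hmeμ : me ∈ μ := by
            have := hmatched k' hk
            rwa [hkt] at this
          have hmeM : me ∈ (pathMatched p).toFinset := by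
            rw [List.mem_toFinset, mem_pathMatched_iff]
            exact ⟨k', hk, by rw [hkt]⟩
          have hcard := htask t
          have hef : e ∈ μ.filter (fun e => e.2 = t) := Finset.mem_filter.mpr ⟨he.1, het⟩
          have hmef : me ∈ μ.filter (fun e => e.2 = t) := Finset.mem_filter.mpr ⟨hmeμ, rfl⟩
          have : e = me := Finset.card_le_one.mp hcard e hef me hmef
          exact he.2 (this ▸ hmeM)
      rw [hMf] at hsplit
      simp only [Finset.card_empty, zero_add] at hsplit
      exact le_trans hsplit hPfc
    · push_neg at ht
      have hPf : p.toFinset.filter (fun e => e.2 = t) = ∅ := by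
        rw [Finset.filter_eq_empty_iff]
        intro e he
        rw [List.mem_toFinset] at he
        obtain ⟨k', hk', rfl⟩ := List.mem_iff_getElem.mp he
        exact ht k' hk'
      rw [hPf] at hsplit
      simp only [Finset.card_empty, add_zero] at hsplit
      refine le_trans hsplit (le_trans (Finset.card_le_card ?_) (htask t))
      intro e he
      simp only [Finset.mem_filter, Finset.mem_sdiff] at he ⊢
      exact ⟨he.1.1, he.2⟩
  · -- tasks in insert j seen
    intro e he
    rcases hmem_apply e he with ⟨h1, _⟩ | h1
    · exact Finset.mem_insert_of_mem (hseen e h1)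
    · obtain ⟨k, hk, rfl⟩ := List.mem_iff_getElem.mp h1
      exact htaskmem k hk

private lemma foldl_inv (step : Finset (Edge n m) → Fin m → Finset (Edge n m))
    (P : Finset (Edge n m) → Finset (Fin m) → Prop)
    (hstep : ∀ μ seen j, j ∉ seen → P μ seen → P (step μ j) (insert j seen)) :
    ∀ (l : List (Fin m)) (seen : Finset (Fin m)) (μ : Finset (Edge n m)),
      l.Nodup → (∀ j ∈ l, j ∉ seen) → P μ seen → P (l.foldl step μ) (seen ∪ l.toFinset) := by
  intro l
  induction l with
  | nil => intro seen μ _ _ h; simpa using h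
  | cons j t ih =>
    intro seen μ hnd hdisj h
    have h1 : P (step μ j) (insert j seen) :=
      hstep μ seen j (hdisj j List.mem_cons_self) h
    have h2 := ih (insert j seen) (step μ j) (List.nodup_cons.mp hnd).2
      (fun j' hj' => by
        simp only [Finset.mem_insert, not_or]
        exact ⟨fun hh => (List.nodup_cons.mp hnd).1 (hh ▸ hj'),
          hdisj j' (List.mem_cons_of_mem _ hj')⟩)
      h1
    have h3 : insert j seen ∪ t.toFinset = seen ∪ (j :: t).toFinset := by
      ext x
      simp only [Finset.mem_union, Finset.mem_insert, List.toFinset_cons, List.mem_toFinset]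
      tauto
    rwa [h3] at h2

private lemma selectPath_aug {cost : List (Edge n m) → ℕ} {b : Fin n → ℕ}
    {E' μ : Finset (Edge n m)} {j : Fin m} {p : List (Edge n m)}
    (h : selectPath cost b E' μ j = some p) : IsAugPathFrom b E' μ j p := by
  unfold selectPath at h
  split at h
  · rename_i hex
    rw [Option.some_inj] at h
    exact h ▸ hex.choose_spec.1
  · exact absurd h (by simp)

private lemma selectPath_eq {cost : List (Edge n m) → ℕ} {b : Fin n → ℕ}
    {E' μ : Finset (Edge n m)} {j : Fin m} (p₀ : List (Edge n m))
    (haug : IsAugPathFrom b E' μ j p₀)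
    (hstrict : ∀ p', IsAugPathFrom b E' μ j p' → p' ≠ p₀ → cost p₀ < cost p') :
    selectPath cost b E' μ j = some p₀ := by
  have hmin : ∀ p', IsAugPathFrom b E' μ j p' → cost p₀ ≤ cost p' := by
    intro p' h'
    by_cases he : p' = p₀
    · subst he; exact le_rfl
    · exact le_of_lt (hstrict p' h' he)
  have hex : ∃ p, IsAugPathFrom b E' μ j p ∧
      ∀ p', IsAugPathFrom b E' μ j p' → cost p ≤ cost p' := ⟨p₀, haug, hmin⟩
  unfold selectPath
  rw [dif_pos hex]
  congr 1
  by_contra hne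
  have h1 := hex.choose_spec
  have h2 := hstrict _ h1.1 hne
  have h3 := h1.2 p₀ haug
  omega

private lemma empty_bmatching (b : Fin n → ℕ) (E' : Finset (Edge n m)) :
    IsBMatching b E' (∅ : Finset (Edge n m)) :=
  ⟨by simp, fun i => by simp [deg], fun j => by simp⟩

private lemma sortedTasks_nodup (q : Fin m → ℝ) : (sortedTasks m q).Nodup :=
  (List.perm_insertionSort _ _).nodup_iff.mpr (List.nodup_finRange m)

private lemma sortedTasks_mem (q : Fin m → ℝ) (j : Fin m) : j ∈ sortedTasks m q :=
  (List.perm_insertionSort _ _).mem_iff.mpr (List.mem_finRange j)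

private lemma runAug_matching (cost : List (Edge n m) → ℕ) (b : Fin n → ℕ) (q : Fin m → ℝ)
    (E' : Finset (Edge n m)) : IsBMatching b E' (runAug cost b q E') := by
  classical
  have key := foldl_inv (fun μ j =>
      match selectPath cost b E' μ j with
      | some p => applyPath μ p
      | none => μ)
    (fun μ seen => IsBMatching b E' μ ∧ ∀ e ∈ μ, e.2 ∈ seen)
    (fun μ seen j hj hP => by
      cases hsel : selectPath cost b E' μ j with
      | none =>
        simp only [hsel]
        exact ⟨hP.1, fun e he => Finset.mem_insert_of_mem (hP.2 e he)⟩
      | some p =>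
        simp only [hsel]
        exact applyPath_inv hP.1 hP.2 hj (selectPath_aug hsel))
    (sortedTasks m q) ∅ ∅ (sortedTasks_nodup q) (by simp)
    ⟨empty_bmatching b E', by simp⟩
  exact key.1

private lemma runAug_top (cost : List (Edge n m) → ℕ) (hn : 0 < n) (b : Fin n → ℕ)
    (q : Fin m → ℝ) (E : Finset (Edge n m)) (a₁ : Fin n) (ha₁ : a₁ = ⟨0, hn⟩)
    (Top : Finset (Edge n m)) (hTopSub : Top ⊆ agentEdges E a₁)
    (hTopb : Top.card ≤ b a₁)
    (Hcost : ∀ (j : Fin m) (i : Fin n) (t : List (Edge n m)), t.length + 1 ≤ n →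
      i.val ≠ 0 → cost [((⟨0, hn⟩ : Fin n), j)] < cost ((i, j) :: t)) :
    (runAug cost b q (deviate E a₁ Top)).filter (fun e => e.1 = a₁) = Top := by
  classical
  set E' := deviate E a₁ Top with hE'
  have hTopa : ∀ e ∈ Top, e.1 = a₁ := fun e he => by
    have := hTopSub he
    unfold agentEdges at this
    exact (Finset.mem_filter.mp this).2
  have hTopE' : Top ⊆ E' := Finset.subset_union_right
  have key := foldl_inv (fun μ j =>
      match selectPath cost b E' μ j with
      | some p => applyPath μ p
      | none => μ)
    (fun μ seen => (IsBMatching b E' μ ∧ ∀ e ∈ μ, e.2 ∈ seen) ∧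
      μ.filter (fun e => e.1 = a₁) = Top.filter (fun e => e.2 ∈ seen))
    (fun μ seen j hj hP => by
      by_cases hTj : (a₁, j) ∈ Top
      · -- j is a Top task: the selected path is [(a₁, j)]
        have hdeg1 : deg μ a₁ < b a₁ := by
          have hss : Top.filter (fun e => e.2 ∈ seen) ⊂ Top := by
            refine (Finset.ssubset_iff_of_subset (Finset.filter_subset _ _)).mpr ?_
            exact ⟨(a₁, j), hTj, fun hc => hj (Finset.mem_filter.mp hc).2⟩
          have hcc := Finset.card_lt_card hss
          unfold deg
          rw [hP.2]
          omega
        have haug : IsAugPathFrom b E' μ j [(a₁, j)] := by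
          refine ⟨by simp, ?_, ?_, ?_, ?_, ?_, by simp, by simp⟩
          · intro e he
            simp only [List.head?_cons, Option.mem_def, Option.some_inj] at he
            subst he; rfl
          · intro e he
            simp only [List.mem_singleton] at he
            subst he
            exact ⟨hTopE' hTj, fun hc => hj (hP.1.2 _ hc)⟩
          · intro k h; simp at h
          · intro k h; simp at h
          · intro e he
            simp only [List.getLast?_singleton, Option.mem_def, Option.some_inj] at he
            subst he
            exact hdeg1
        have hstrict : ∀ p', IsAugPathFrom b E' μ j p' → p' ≠ [(a₁, j)] →
            cost [(a₁, j)] < cost p' := by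
          intro p' hp' hne
          match p', hp'.ne with
          | e :: t, _ =>
            have hej : e.2 = j := hp'.starts e (by simp)
            by_cases hia : e.1 = a₁
            · match t with
              | [] =>
                exact absurd (by rw [show e = (a₁, j) from Prod.ext hia hej]) hne
              | f :: t' =>
                have h01 : 0 + 1 < (e :: f :: t').length := by simp
                have hsat := hp'.satInterior 0 h01
                simp only [List.get_eq_getElem, List.getElem_cons_zero] at hsat
                rw [hia] at hsat
                omega
            · have hlen : t.length + 1 ≤ n := by
                have h1 := hp'.agentsNodup.length_le_card
                simpa using h1
              have hival : e.1.val ≠ 0 := by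
                intro hc
                exact hia (by rw [ha₁]; exact Fin.ext hc)
              have hcost := Hcost j e.1 t hlen hival
              have he2 : (e.1, j) = e := by
                rw [← hej]
              rw [he2] at hcost
              rw [ha₁]
              exact hcost
        have hsel := selectPath_eq [(a₁, j)] haug hstrict
        simp only [hsel]
        have happ : applyPath μ [(a₁, j)] = insert (a₁, j) μ := by
          simp only [applyPath, pathMatched]
          simp only [List.tail_cons, List.zip_nil_right, List.map_nil, List.toFinset_nil,
            Finset.sdiff_empty, List.toFinset_cons, List.toFinset_nil, LawfulSingleton.insert_empty_eq]
          ext x; simp [or_comm]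
        have hinv := applyPath_inv hP.1.1 hP.1.2 hj haug
        refine ⟨hinv, ?_⟩
        rw [happ, Finset.filter_insert, if_pos rfl, hP.2]
        ext f
        simp only [Finset.mem_insert, Finset.mem_filter]
        constructor
        · rintro (rfl | ⟨hf1, hf2⟩)
          · exact ⟨hTj, Or.inl rfl⟩
          · exact ⟨hf1, Or.inr hf2⟩
        · rintro ⟨hf1, hf2 | hf2⟩
          · exact Or.inl (Prod.ext (hTopa f hf1) hf2)
          · exact Or.inr ⟨hf1, hf2⟩
      · -- j is not a Top task: the selected path avoids a₁
        have hfiltereq : Top.filter (fun e => e.2 ∈ insert j seen)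
            = Top.filter (fun e => e.2 ∈ seen) := by
          refine Finset.filter_congr ?_
          intro f hf
          simp only [Finset.mem_insert, eq_iff_iff]
          constructor
          · rintro (hc | hc)
            · exfalso
              apply hTj
              have hfe : f = (a₁, j) := Prod.ext (hTopa f hf) hc
              rwa [hfe] at hf
            · exact hc
          · exact Or.inr
        cases hsel : selectPath cost b E' μ j with
        | none =>
          simp only [hsel]
          refine ⟨⟨hP.1.1, fun e he => Finset.mem_insert_of_mem (hP.1.2 e he)⟩, ?_⟩
          rw [hfiltereq]
          exact hP.2
        | some p =>
          simp only [hsel]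
          have hpaug := selectPath_aug hsel
          have havoid : ∀ e ∈ p, e.1 ≠ a₁ := by
            intro e he hea
            have heE : e ∈ E' := (hpaug.mem e he).1
            have heμ : e ∉ μ := (hpaug.mem e he).2
            have heTop : e ∈ Top := by
              have heE2 : e ∈ E.filter (fun e => e.1 ≠ a₁) ∪ Top := heE
              rcases Finset.mem_union.mp heE2 with h | h
              · exact absurd hea (Finset.mem_filter.mp h).2
              · exact h
            obtain ⟨k, hk, rfl⟩ := List.mem_iff_getElem.mp he
            match k, hk, hea, heTop, heμ with
            | 0, hk, hea, heTop, heμ =>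
              have hh : (p[0]'hk).2 = j := hpaug.starts _ (by
                rw [List.head?_eq_getElem?, List.getElem?_eq_getElem hk]; rfl)
              exact hTj (show (a₁, j) ∈ Top by
                rw [show (a₁, j) = p[0]'hk from Prod.ext hea.symm hh.symm]
                exact heTop)
            | (k' + 1), hk, hea, heTop, heμ =>
              have hm' : ((p[k']'(Nat.lt_of_succ_lt hk)).1, (p[k'+1]'hk).2) ∈ μ := by
                simpa using hpaug.matched k' hk
              have hseen2 : (p[k'+1]'hk).2 ∈ seen :=
                hP.1.2 ((p[k']'(Nat.lt_of_succ_lt hk)).1, (p[k'+1]'hk).2) hm'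
              have hmem2 : p[k'+1]'hk ∈ μ.filter (fun e => e.1 = a₁) := by
                rw [hP.2]
                exact Finset.mem_filter.mpr ⟨heTop, hseen2⟩
              exact heμ (Finset.mem_filter.mp hmem2).1
          have hfilterapply : (applyPath μ p).filter (fun e => e.1 = a₁)
              = μ.filter (fun e => e.1 = a₁) := by
            ext f
            simp only [Finset.mem_filter, applyPath, Finset.mem_union, Finset.mem_sdiff,
              List.mem_toFinset]
            constructor
            · rintro ⟨hf, hfa⟩
              rcases hf with ⟨hf1, _⟩ | hf1
              · exact ⟨hf1, hfa⟩
              · exact absurd hfa (havoid f hf1)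
            · rintro ⟨hf1, hfa⟩
              refine ⟨Or.inl ⟨hf1, ?_⟩, hfa⟩
              intro hfM
              obtain ⟨k, hk, hfk⟩ := mem_pathMatched_iff.mp hfM
              exact havoid (p[k]'(Nat.lt_of_succ_lt hk)) (List.getElem_mem _)
                (((congrArg Prod.fst hfk).symm).trans hfa)
          have hinv := applyPath_inv hP.1.1 hP.1.2 hj hpaug
          refine ⟨hinv, ?_⟩
          rw [hfilterapply, hP.2, hfiltereq])
    (sortedTasks m q) ∅ ∅ (sortedTasks_nodup q) (by simp)
    ⟨⟨empty_bmatching b E', by simp⟩, by simp⟩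
  have hkey2 := key.2
  unfold runAug
  rw [hkey2]
  refine Finset.filter_true_of_mem ?_
  intro e _
  simp only [Finset.empty_union, List.mem_toFinset]
  exact sortedTasks_mem q e.2

private lemma sum_le_top (q : Fin m → ℝ) (hq : ∀ j, 0 < q j) (G A Top : Finset (Edge n m))
    (hA : A ⊆ G) (hcard : A.card ≤ Top.card)
    (hbest : ∀ e ∈ Top, ∀ f ∈ G, f ∉ Top → q f.2 ≤ q e.2) :
    ∑ e ∈ A, q e.2 ≤ ∑ e ∈ Top, q e.2 := by
  classical
  rw [← Finset.sum_inter_add_sum_sdiff A Top (fun e => q e.2),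
      ← Finset.sum_inter_add_sum_sdiff Top A (fun e => q e.2)]
  rw [Finset.inter_comm A Top]
  refine add_le_add (le_refl _) ?_
  have hc1 := Finset.card_inter_add_card_sdiff A Top
  have hc2 := Finset.card_inter_add_card_sdiff Top A
  have hc3 : (A ∩ Top).card = (Top ∩ A).card := by rw [Finset.inter_comm]
  have hcs : (A \ Top).card ≤ (Top \ A).card := by omega
  by_cases hAe : (A \ Top).Nonempty
  · have hTe : (Top \ A).Nonempty :=
      Finset.card_pos.mp (lt_of_lt_of_le (Finset.card_pos.mpr hAe) hcs)
    obtain ⟨e₀, he₀, hmin⟩ := Finset.exists_min_image (Top \ A) (fun e => q e.2) hTe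
    have h1 : ∑ e ∈ A \ Top, q e.2 ≤ (A \ Top).card • q e₀.2 := by
      refine Finset.sum_le_card_nsmul _ _ _ ?_
      intro f hf
      have hf1 := Finset.mem_sdiff.mp hf
      exact hbest e₀ (Finset.mem_sdiff.mp he₀).1 f (hA hf1.1) hf1.2
    have h2 : ((A \ Top).card : ℝ) * q e₀.2 ≤ ((Top \ A).card : ℝ) * q e₀.2 :=
      mul_le_mul_of_nonneg_right (Nat.cast_le.mpr hcs) (hq e₀.2).le
    have h3 : (Top \ A).card • q e₀.2 ≤ ∑ e ∈ Top \ A, q e.2 :=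
      Finset.card_nsmul_le_sum _ _ _ hmin
    rw [nsmul_eq_mul] at h1 h3
    linarith
  · rw [Finset.not_nonempty_iff_eq_empty] at hAe
    rw [hAe, Finset.sum_empty]
    exact Finset.sum_nonneg fun e _ => (hq e.2).le

private lemma util_bound (cost : List (Edge n m) → ℕ) (b : Fin n → ℕ)
    (q : Fin m → ℝ) (hq : ∀ j, 0 < q j) (E : Finset (Edge n m)) (a₁ : Fin n)
    (S Top : Finset (Edge n m)) (hS : S ⊆ agentEdges E a₁)
    (hTopCard : Top.card = min (b a₁) (agentEdges E a₁).card)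
    (hTopBest : ∀ e ∈ Top, ∀ f ∈ agentEdges E a₁, f ∉ Top → q f.2 ≤ q e.2) :
    util q a₁ (runAug cost b q (deviate E a₁ S)) ≤ ∑ e ∈ Top, q e.2 := by
  classical
  have hM := runAug_matching cost b q (deviate E a₁ S)
  set μ := runAug cost b q (deviate E a₁ S) with hμ
  set A := μ.filter (fun e => e.1 = a₁) with hA
  have hAsub : A ⊆ agentEdges E a₁ := by
    intro e he
    have h1 := Finset.mem_filter.mp he
    have h2 : e ∈ E.filter (fun e => e.1 ≠ a₁) ∪ S := hM.1 h1.1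
    rcases Finset.mem_union.mp h2 with h | h
    · exact absurd h1.2 (Finset.mem_filter.mp h).2
    · exact hS h
  have hAcard1 : A.card ≤ b a₁ := hM.2.1 a₁
  have hAcard2 : A.card ≤ (agentEdges E a₁).card := Finset.card_le_card hAsub
  have hAcard : A.card ≤ Top.card := by rw [hTopCard]; exact le_min hAcard1 hAcard2
  exact sum_le_top q hq (agentEdges E a₁) A Top hAsub hAcard hTopBest

end AuxProof

/-- For both `M_BFS` and `M_DFS`, the first agent's optimal strategy is to
report exactly the edges to its `b a₁` highest-valued incident tasks: if `Top` is such a set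
of edges (of cardinality `min (b a₁) |T₁|`, all its tasks at least as valuable as any other
incident task), then reporting `Top` makes the mechanism assign agent `a₁` precisely the
edges of `Top`, and no other report gives `a₁` a larger utility. -/
theorem first_agent_best_strategy (n m : ℕ) (hn : 0 < n) (b : Fin n → ℕ) (q : Fin m → ℝ)
    (hq : ∀ j, 0 < q j) (E : Finset (Edge n m)) (a₁ : Fin n) (ha₁ : a₁ = ⟨0, hn⟩)
    (hne : (agentEdges E a₁).Nonempty) (Top : Finset (Edge n m))
    (hTopSub : Top ⊆ agentEdges E a₁)
    (hTopCard : Top.card = min (b a₁) (agentEdges E a₁).card)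
    (hTopBest : ∀ e ∈ Top, ∀ f ∈ agentEdges E a₁, f ∉ Top → q f.2 ≤ q e.2) :
    ((MBFS b q (deviate E a₁ Top)).filter (fun e => e.1 = a₁) = Top ∧
      ∀ S, ValidReport E a₁ S →
        util q a₁ (MBFS b q (deviate E a₁ S)) ≤ util q a₁ (MBFS b q (deviate E a₁ Top))) ∧
    ((MDFS b q (deviate E a₁ Top)).filter (fun e => e.1 = a₁) = Top ∧
      ∀ S, ValidReport E a₁ S →
        util q a₁ (MDFS b q (deviate E a₁ S)) ≤ util q a₁ (MDFS b q (deviate E a₁ Top))) := by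
  have hTopb : Top.card ≤ b a₁ := by rw [hTopCard]; exact min_le_left _ _
  have hbfs := runAug_top (bfsCost n m) hn b q E a₁ ha₁ Top hTopSub hTopb
    (fun j i t hlen hi => bfsCost_lt hn j i t hlen hi)
  have hdfs := runAug_top (dfsCost n m) hn b q E a₁ ha₁ Top hTopSub hTopb
    (fun j i t hlen hi => dfsCost_lt hn j i t hlen hi)
  have hub : util q a₁ (MBFS b q (deviate E a₁ Top)) = ∑ e ∈ Top, q e.2 := by
    unfold util MBFS
    rw [hbfs]
  have hud : util q a₁ (MDFS b q (deviate E a₁ Top)) = ∑ e ∈ Top, q e.2 := by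
    unfold util MDFS
    rw [hdfs]
  refine ⟨⟨hbfs, ?_⟩, ⟨hdfs, ?_⟩⟩
  · intro S hSv
    rw [hub]
    exact util_bound (bfsCost n m) b q hq E a₁ S Top hSv.1 hTopCard hTopBest
  · intro S hSv
    rw [hud]
    exact util_bound (dfsCost n m) b q hq E a₁ S Top hSv.1 hTopCard hTopBest
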